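/- Let f be a multivariate real polynomial in n variables, let h ∈ ℝ^n, and let g ∈ cone(h) satisfy g(x) ≤ f(x) for all x ∈ ℝ^n. Then g(round(h)) ≤ f(x) for every x ∈ ℤ^n; in particular g(round(h)) is a lower bound on the integer minimum inf_{x ∈ ℤ^n} f(x). -/
import Mathlib


open MvPolynomial Finset

/-- `g ∈ cone(h)`: a conic combination of monomials with even exponents
shifted by `h` (the constant coefficient `b 0` may be arbitrary). -/
def MemCone {n : ℕ} (h : Fin n → ℝ) (g : MvPolynomial (Fin n) ℝ) : Prop :=
  ∃ (J : Finset (Fin n → ℕ)) (b : (Fin n → ℕ) → ℝ),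
    (∀ α ∈ J, α ≠ 0 → 0 ≤ b α) ∧
    g = ∑ α ∈ J, MvPolynomial.C (b α) *
      ∏ i, (MvPolynomial.X i - MvPolynomial.C (h i)) ^ (2 * α i)

lemma round_closest (h : ℝ) (m : ℤ) : |(round h : ℝ) - h| ≤ |(m : ℝ) - h| := by
  rcases eq_or_ne m (round h) with rfl | hne
  · exact le_refl _
  · have h1 : (1 : ℝ) ≤ |(m : ℝ) - (round h : ℝ)| := by
      rw [← Int.cast_sub, ← Int.cast_abs]
      exact_mod_cast Int.one_le_abs (sub_ne_zero.mpr hne)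
    have h2 : |(round h : ℝ) - h| ≤ 1 / 2 := abs_sub_comm h (round h : ℝ) ▸ abs_sub_round h
    have := abs_sub_abs_le_abs_sub ((m : ℝ) - (round h : ℝ)) ((m : ℝ) - h)
    have h3 : |(m : ℝ) - round h - ((m : ℝ) - h)| = |(round h : ℝ) - h| := by
      rw [show (m : ℝ) - round h - ((m : ℝ) - h) = -((round h : ℝ) - h) by ring, abs_neg]
    linarith [abs_sub_abs_le_abs_sub ((m : ℝ) - (round h : ℝ)) ((m : ℝ) - h), h3 ▸ this]

theorem cone_underestimator_gives_lower_bound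
    {n : ℕ} (f g : MvPolynomial (Fin n) ℝ) (h : Fin n → ℝ)
    (hg : MemCone h g) (hle : ∀ x : Fin n → ℝ, eval x g ≤ eval x f) :
    ∀ x : Fin n → ℤ,
      eval (fun i => (round (h i) : ℝ)) g ≤ eval (fun i => (x i : ℝ)) f := by
  intro x
  have key : eval (fun i => (round (h i) : ℝ)) g ≤ eval (fun i => (x i : ℝ)) g := by
    obtain ⟨J, b, hb, rfl⟩ := hg
    simp only [map_sum, map_mul, eval_C, map_prod, map_pow, map_sub, eval_X]
    apply Finset.sum_le_sum
    intro α hα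
    rcases eq_or_ne α 0 with rfl | hα0
    · simp
    · have hbα := hb α hα hα0
      apply mul_le_mul_of_nonneg_left _ hbα
      apply Finset.prod_le_prod
      · intro i _
        rw [pow_mul]
        positivity
      · intro i _
        rw [pow_mul, pow_mul]
        apply pow_le_pow_left₀ (sq_nonneg _)
        rw [← sq_abs ((round (h i):ℝ) - h i), ← sq_abs ((x i : ℝ) - h i)]
        exact pow_le_pow_left₀ (abs_nonneg _) (round_closest (h i) (x i)) 2
  exact key.trans (hle _)
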